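/- arXiv:2502.02109 — 4 statements merged into one kernel-verified Lean document; each statement's English description precedes it below -/
import Mathlib

section
/- Let X be a nonempty measurable space and ν a Markov kernel from X to ℝ such that for every x the measure ν(x) has a finite second moment. Define the conditional mean f*(x) = ∫ y dν(x)(y) and the conditional variance V(x) = ∫ (y − f*(x))² dν(x)(y). Then the worst-case risk of f*, i.e., the supremum over all probability measures m on X of ∫ (y − f*(x))² d(m ⊗ ν)(x, y) (integrals taken in the extended nonnegative reals), equals ⨆_{x ∈ X} V(x), the supremum of the conditional variance. -/
open MeasureTheory ProbabilityTheory

/-- The worst-case risk of the conditional-mean predictor `fstar` equals the supremum of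
the conditional variance: for a Markov kernel `ν` from `X` to `ℝ` with finite second
moments, conditional mean `fstar` and conditional variance `V`, the supremum over all
probability measures `m` on `X` of `∫⁻ (y - fstar x)² d(m ⊗ₘ ν)` (in the extended
nonnegative reals) equals `⨆ x, V x`. -/
theorem worst_case_risk_of_conditional_mean
    {X : Type*} [MeasurableSpace X] [Nonempty X]
    (ν : Kernel X ℝ) [IsMarkovKernel ν]
    (hν : ∀ x, Integrable (fun y => y ^ 2) (ν x))
    (fstar : X → ℝ) (hfstar : ∀ x, fstar x = ∫ y, y ∂ν x)
    (V : X → ℝ) (hV : ∀ x, V x = ∫ y, (y - fstar x) ^ 2 ∂ν x) :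
    (⨆ (m : Measure X) (_ : IsProbabilityMeasure m),
        ∫⁻ p : X × ℝ, ENNReal.ofReal ((p.2 - fstar p.1) ^ 2) ∂(m ⊗ₘ ν))
      = ⨆ x : X, ENNReal.ofReal (V x) := by
  -- measurability of fstar
  have hfsm : StronglyMeasurable fstar := by
    have : StronglyMeasurable fun x => ∫ y, (fun _ y => y) x y ∂ν x :=
      StronglyMeasurable.integral_kernel_prod_right
        (f := fun (_ : X) (y : ℝ) => y) (measurable_snd.stronglyMeasurable)
    simpa [hfstar] using (funext hfstar ▸ this : StronglyMeasurable fstar)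
  have hfm : Measurable fstar := hfsm.measurable
  -- measurability of V
  have hVsm : StronglyMeasurable V := by
    have : StronglyMeasurable fun x => ∫ y, (fun x y => (y - fstar x) ^ 2) x y ∂ν x :=
      StronglyMeasurable.integral_kernel_prod_right
        (f := fun x (y : ℝ) => (y - fstar x) ^ 2)
        (((measurable_snd.sub (hfm.comp measurable_fst)).pow_const 2).stronglyMeasurable)
    simpa using (funext hV ▸ this : StronglyMeasurable V)
  have hVm : Measurable V := hVsm.measurable
  -- integrability of (y - fstar x)^2
  have hint : ∀ x, Integrable (fun y => (y - fstar x) ^ 2) (ν x) := by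
    intro x
    have hy2 : MemLp (fun y : ℝ => y) 2 (ν x) :=
      (memLp_two_iff_integrable_sq measurable_id.aestronglyMeasurable).2 (hν x)
    have hc : MemLp (fun _ : ℝ => fstar x) 2 (ν x) := memLp_const _
    exact (memLp_two_iff_integrable_sq
      ((measurable_id.sub measurable_const).aestronglyMeasurable)).1 (hy2.sub hc)
  -- inner integral
  have hkey : ∀ x, ∫⁻ y, ENNReal.ofReal ((y - fstar x) ^ 2) ∂ν x = ENNReal.ofReal (V x) := by
    intro x
    rw [hV]
    rw [← ofReal_integral_eq_lintegral_ofReal (hint x)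
      (Filter.Eventually.of_forall fun y => sq_nonneg _)]
  -- product integral
  have hmeas : Measurable fun p : X × ℝ => ENNReal.ofReal ((p.2 - fstar p.1) ^ 2) :=
    ((measurable_snd.sub (hfm.comp measurable_fst)).pow_const 2).ennreal_ofReal
  have hprod : ∀ (m : Measure X) [IsProbabilityMeasure m],
      ∫⁻ p : X × ℝ, ENNReal.ofReal ((p.2 - fstar p.1) ^ 2) ∂(m ⊗ₘ ν)
        = ∫⁻ x, ENNReal.ofReal (V x) ∂m := by
    intro m _
    rw [Measure.lintegral_compProd hmeas]
    exact lintegral_congr fun x => hkey x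
  refine le_antisymm ?_ ?_
  · refine iSup₂_le fun m hm => ?_
    rw [hprod m]
    calc ∫⁻ x, ENNReal.ofReal (V x) ∂m
        ≤ ∫⁻ _, (⨆ x, ENNReal.ofReal (V x)) ∂m :=
          lintegral_mono fun x => le_iSup (fun x => ENNReal.ofReal (V x)) x
      _ = ⨆ x, ENNReal.ofReal (V x) := by simp
  · refine iSup_le fun x => ?_
    have : ENNReal.ofReal (V x) = ∫⁻ x', ENNReal.ofReal (V x') ∂(Measure.dirac x) := by
      rw [lintegral_dirac' _ (hVm.ennreal_ofReal)]
    rw [this, ← hprod (Measure.dirac x)]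
    exact le_iSup₂ (f := fun (m : Measure X) (_ : IsProbabilityMeasure m) =>
      ∫⁻ p : X × ℝ, ENNReal.ofReal ((p.2 - fstar p.1) ^ 2) ∂(m ⊗ₘ ν)) (Measure.dirac x)
      (by infer_instance)
end

section
/- (Theorem 1, minimax optimality of the causal predictor.) Let X be a nonempty measurable space and ν a Markov kernel from X to ℝ such that for every x the measure ν(x) has a finite second moment. Define the conditional mean f*(x) = ∫ y dν(x)(y). Then for every measurable f : X → ℝ, ⨆_{m} ∫ (y − f*(x))² d(m ⊗ ν)(x, y) ≤ ⨆_{m} ∫ (y − f(x))² d(m ⊗ ν)(x, y), where both suprema range over all probability measures m on X and the integrals of the nonnegative integrands are taken in the extended nonnegative reals. That is, f* minimizes the worst-case expected squared prediction error over the class of all joint distributions obtained by fixing the conditional law ν of the outcome given its causal parents and varying the marginal law of the parents arbitrarily. -/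
open MeasureTheory ProbabilityTheory

lemma cmean_min (μ : Measure ℝ) [IsProbabilityMeasure μ]
    (h : Integrable (fun y => y ^ 2) μ) (c : ℝ) :
    ∫⁻ y, ENNReal.ofReal ((y - ∫ z, z ∂μ) ^ 2) ∂μ ≤ ∫⁻ y, ENNReal.ofReal ((y - c) ^ 2) ∂μ := by
  have hid : Integrable (fun y : ℝ => y) μ := by
    have h2 : MemLp (fun y : ℝ => y) 2 μ := by
      have := (memLp_two_iff_integrable_sq (aestronglyMeasurable_id (μ := μ))).2 (by simpa [sq, id] using h)
      exact this
    exact (h2.mono_exponent (by norm_num)).integrable le_rfl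
  set mu1 := ∫ z, z ∂μ with hmu1
  have key : ∀ d : ℝ, Integrable (fun y => (y - d) ^ 2) μ ∧
      ∫ y, (y - d) ^ 2 ∂μ = ∫ y, y ^ 2 ∂μ - 2 * d * mu1 + d ^ 2 := by
    intro d
    have hint : Integrable (fun y => y ^ 2 - 2 * d * y + d ^ 2) μ :=
      ((h.sub (hid.const_mul (2 * d))).add (integrable_const _))
    have heq : (fun y : ℝ => (y - d) ^ 2) = fun y => y ^ 2 - 2 * d * y + d ^ 2 := by
      funext y; ring
    refine ⟨heq ▸ hint, ?_⟩
    have hsub : Integrable (fun y : ℝ => y ^ 2 - 2 * d * y) μ := h.sub (hid.const_mul (2 * d))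
    rw [heq, integral_add hsub (integrable_const _),
      integral_sub h (hid.const_mul (2 * d)), MeasureTheory.integral_const_mul, integral_const]
    simp [hmu1]
  have hreal : ∫ y, (y - mu1) ^ 2 ∂μ ≤ ∫ y, (y - c) ^ 2 ∂μ := by
    rw [(key mu1).2, (key c).2]; nlinarith [sq_nonneg (c - mu1)]
  rw [← ofReal_integral_eq_lintegral_ofReal (key mu1).1 (.of_forall fun y => sq_nonneg _),
    ← ofReal_integral_eq_lintegral_ofReal (key c).1 (.of_forall fun y => sq_nonneg _)]
  exact ENNReal.ofReal_le_ofReal hreal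

/-- Theorem 1 (minimax optimality of the causal predictor): for a Markov kernel `ν` from
`X` to `ℝ` with finite second moments and conditional mean `fstar x = ∫ y ∂ν x`, for
every measurable `f : X → ℝ`, the worst-case risk of `fstar` over all probability
measures `m` on `X` (marginals of the causal parents, with the mechanism `ν` fixed) is
at most the worst-case risk of `f`, risks taken in the extended nonnegative reals. -/
theorem minimax_optimality_of_causal_predictor
    {X : Type*} [MeasurableSpace X] [Nonempty X]
    (ν : Kernel X ℝ) [IsMarkovKernel ν]
    (hν : ∀ x, Integrable (fun y => y ^ 2) (ν x))
    (fstar : X → ℝ) (hfstar : ∀ x, fstar x = ∫ y, y ∂ν x) :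
    ∀ f : X → ℝ, Measurable f →
      (⨆ (m : Measure X) (_ : IsProbabilityMeasure m),
          ∫⁻ p : X × ℝ, ENNReal.ofReal ((p.2 - fstar p.1) ^ 2) ∂(m ⊗ₘ ν))
        ≤ ⨆ (m : Measure X) (_ : IsProbabilityMeasure m),
            ∫⁻ p : X × ℝ, ENNReal.ofReal ((p.2 - f p.1) ^ 2) ∂(m ⊗ₘ ν) := by
  intro f hf
  have hfstarm : Measurable fstar := by
    have hsm : StronglyMeasurable (Function.uncurry fun (_ : X) (y : ℝ) => y) :=
      (measurable_snd (α := X) (β := ℝ)).stronglyMeasurable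
    have h2 : StronglyMeasurable fun x => ∫ y, y ∂ν x :=
      hsm.integral_kernel_prod_right (κ := ν)
    have : fstar = fun x => ∫ y, y ∂ν x := funext hfstar
    rw [this]; exact h2.measurable
  refine iSup_mono fun m => iSup_mono fun hm => ?_
  have hmeas : ∀ g : X → ℝ, Measurable g →
      Measurable fun p : X × ℝ => ENNReal.ofReal ((p.2 - g p.1) ^ 2) := fun g hg =>
    ENNReal.measurable_ofReal.comp ((measurable_snd.sub (hg.comp measurable_fst)).pow_const 2)
  rw [Measure.lintegral_compProd (hmeas fstar hfstarm),
    Measure.lintegral_compProd (hmeas f hf)]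
  refine lintegral_mono fun x => ?_
  have h3 := cmean_min (ν x) (hν x) (f x)
  simpa [hfstar x] using h3
end

section
/- Let X be a nonempty measurable space and ν a Markov kernel from X to ℝ such that for every x the measure ν(x) has a finite second moment. Define the conditional mean f*(x) = ∫ y dν(x)(y). Let M be any set of probability measures on X that contains all Dirac measures δ_x for x ∈ X. Then for every measurable f : X → ℝ, ⨆_{m ∈ M} ∫ (y − f*(x))² d(m ⊗ ν)(x, y) ≤ ⨆_{m ∈ M} ∫ (y − f(x))² d(m ⊗ ν)(x, y), with integrals of the nonnegative integrands taken in the extended nonnegative reals. -/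
open MeasureTheory ProbabilityTheory

lemma pointwise_mean_min (P : Measure ℝ) [IsProbabilityMeasure P]
    (h2 : Integrable (fun y => y ^ 2) P) (c : ℝ) :
    ∫⁻ y, ENNReal.ofReal ((y - ∫ z, z ∂P) ^ 2) ∂P
      ≤ ∫⁻ y, ENNReal.ofReal ((y - c) ^ 2) ∂P := by
  set μ := ∫ z, z ∂P with hμ
  have hmem : MemLp (fun y : ℝ => y) 2 P :=
    (memLp_two_iff_integrable_sq measurable_id.aestronglyMeasurable).2 h2
  have hint1 : Integrable (fun y : ℝ => y) P := hmem.integrable (by norm_num)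
  have hsub : ∀ a : ℝ, Integrable (fun y : ℝ => (y - a) ^ 2) P := by
    intro a
    exact (memLp_two_iff_integrable_sq
      (measurable_id.aestronglyMeasurable.sub aestronglyMeasurable_const)).1
      (hmem.sub (memLp_const a))
  have key : ∫ y, (y - μ) ^ 2 ∂P ≤ ∫ y, (y - c) ^ 2 ∂P := by
    have hdiff : ∫ y, ((y - c) ^ 2 - (y - μ) ^ 2) ∂P = (μ - c) ^ 2 := by
      have : ∀ y : ℝ, (y - c) ^ 2 - (y - μ) ^ 2 = (μ - c) * (2 * y) + (c ^ 2 - μ ^ 2) := by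
        intro y; ring
      simp_rw [this]
      rw [integral_add ((hint1.const_mul 2).const_mul _) (integrable_const _),
        integral_const_mul, integral_const_mul, integral_const, probReal_univ]
      simp [← hμ]; ring
    have := integral_sub (hsub c) (hsub μ)
    nlinarith [this.symm.trans hdiff]
  rw [← ofReal_integral_eq_lintegral_ofReal (hsub μ)
      (Filter.Eventually.of_forall fun y => sq_nonneg _),
    ← ofReal_integral_eq_lintegral_ofReal (hsub c)
      (Filter.Eventually.of_forall fun y => sq_nonneg _)]
  exact ENNReal.ofReal_le_ofReal key

/-- Minimax optimality of the causal predictor over any family of intervention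
distributions containing all Dirac measures. -/
theorem minimax_optimality_over_family_containing_diracs
    {X : Type*} [MeasurableSpace X] [Nonempty X]
    (ν : Kernel X ℝ) [IsMarkovKernel ν]
    (hν : ∀ x, Integrable (fun y => y ^ 2) (ν x))
    (fstar : X → ℝ) (hfstar : ∀ x, fstar x = ∫ y, y ∂ν x)
    (M : Set (Measure X)) (hM : ∀ m ∈ M, IsProbabilityMeasure m)
    (hdirac : ∀ x : X, Measure.dirac x ∈ M) :
    ∀ f : X → ℝ, Measurable f →
      (⨆ m ∈ M, ∫⁻ p : X × ℝ, ENNReal.ofReal ((p.2 - fstar p.1) ^ 2) ∂(m ⊗ₘ ν))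
        ≤ ⨆ m ∈ M, ∫⁻ p : X × ℝ, ENNReal.ofReal ((p.2 - f p.1) ^ 2) ∂(m ⊗ₘ ν) := by
  intro f hf
  have hfstar_meas : Measurable fstar := by
    have h : StronglyMeasurable fun x => ∫ y, (fun (_ : X) (y : ℝ) => y) x y ∂ν x :=
      StronglyMeasurable.integral_kernel_prod_right
        (measurable_snd.stronglyMeasurable)
    have he : fstar = fun x => ∫ y, y ∂ν x := funext hfstar
    rw [he]
    exact h.measurable
  have hmeas_star : Measurable fun p : X × ℝ =>
      ENNReal.ofReal ((p.2 - fstar p.1) ^ 2) :=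
    ((measurable_snd.sub (hfstar_meas.comp measurable_fst)).pow_const 2).ennreal_ofReal
  have hmeas_f : Measurable fun p : X × ℝ => ENNReal.ofReal ((p.2 - f p.1) ^ 2) :=
    ((measurable_snd.sub (hf.comp measurable_fst)).pow_const 2).ennreal_ofReal
  set S := ⨆ m ∈ M, ∫⁻ p : X × ℝ, ENNReal.ofReal ((p.2 - f p.1) ^ 2) ∂(m ⊗ₘ ν) with hS
  refine iSup₂_le fun m hm => ?_
  haveI := hM m hm
  rw [Measure.lintegral_compProd hmeas_star]
  have hpt : ∀ x : X,
      (∫⁻ y, ENNReal.ofReal ((y - fstar x) ^ 2) ∂ν x) ≤ S := by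
    intro x
    haveI : IsProbabilityMeasure (ν x) := IsMarkovKernel.isProbabilityMeasure x
    have h1 : (∫⁻ y, ENNReal.ofReal ((y - fstar x) ^ 2) ∂ν x)
        ≤ ∫⁻ y, ENNReal.ofReal ((y - f x) ^ 2) ∂ν x := by
      rw [hfstar x]; exact pointwise_mean_min (ν x) (hν x) (f x)
    have h2 : (∫⁻ y, ENNReal.ofReal ((y - f x) ^ 2) ∂ν x)
        = ∫⁻ p : X × ℝ, ENNReal.ofReal ((p.2 - f p.1) ^ 2) ∂(Measure.dirac x ⊗ₘ ν) := by
      rw [Measure.lintegral_compProd hmeas_f, lintegral_dirac']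
      exact Measurable.lintegral_kernel_prod_right' hmeas_f
    calc _ ≤ _ := h1
      _ = _ := h2
      _ ≤ S := le_iSup₂_of_le (Measure.dirac x) (hdirac x) le_rfl
  calc (∫⁻ x, ∫⁻ y, ENNReal.ofReal ((y - fstar x) ^ 2) ∂ν x ∂m)
      ≤ ∫⁻ _, S ∂m := lintegral_mono hpt
    _ = S := by simp
end

section
/- Let X be a nonempty measurable space, ν a Markov kernel from X to ℝ with finite second moments (∫ y² dν(x)(y) < ∞ for all x), f*(x) = ∫ y dν(x)(y) the conditional mean, and V(x) = ∫ (y − f*(x))² dν(x)(y) the conditional variance. Then for every measurable f : X → ℝ and every x ∈ X, the worst-case risk of f, ⨆_{m} ∫ (y − f(x'))² d(m ⊗ ν)(x', y) (supremum over all probability measures m on X, integrals in the extended nonnegative reals), is at least V(x); consequently the worst-case risk of any measurable predictor is bounded below by ⨆_{x ∈ X} V(x). -/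
open MeasureTheory ProbabilityTheory

lemma aux_var_min {μ : Measure ℝ} [IsProbabilityMeasure μ]
    (h2 : Integrable (fun y => y ^ 2) μ) (c : ℝ) :
    ∫ y, (y - ∫ z, z ∂μ) ^ 2 ∂μ ≤ ∫ y, (y - c) ^ 2 ∂μ := by
  set m := ∫ z, z ∂μ with hm
  have hL2 : MemLp (fun y : ℝ => y) 2 μ :=
    (memLp_two_iff_integrable_sq measurable_id.aestronglyMeasurable).2 h2
  have h1 : Integrable (fun y : ℝ => y) μ :=
    hL2.integrable (by norm_num)
  have hsub : ∀ d : ℝ, Integrable (fun y => (y - d) ^ 2) μ := by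
    intro d
    have : MemLp (fun y : ℝ => y - d) 2 μ := hL2.sub (memLp_const d)
    exact (memLp_two_iff_integrable_sq this.aestronglyMeasurable).1 this
  have hexp : ∀ y : ℝ, (y - c) ^ 2 = (y - m) ^ 2 + (2 * (m - c)) * (y - m) + (m - c) ^ 2 := by
    intro y; ring
  have hint_lin : Integrable (fun y => (2 * (m - c)) * (y - m)) μ :=
    ((h1.sub (integrable_const m)).const_mul _)
  have hmean0 : ∫ y, (y - m) ∂μ = 0 := by
    rw [integral_sub h1 (integrable_const m), integral_const]
    simp [hm]
  calc ∫ y, (y - m) ^ 2 ∂μ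
      ≤ ∫ y, (y - m) ^ 2 ∂μ + (m - c) ^ 2 := by nlinarith [sq_nonneg (m - c)]
    _ = ∫ y, (y - c) ^ 2 ∂μ := by
        rw [show ∫ y, (y - c) ^ 2 ∂μ
            = ∫ y, ((y - m) ^ 2 + (2 * (m - c)) * (y - m) + (m - c) ^ 2) ∂μ from by
              simp_rw [← hexp]]
        have hA : Integrable (fun y => (y - m) ^ 2 + 2 * (m - c) * (y - m)) μ :=
          (hsub m).add hint_lin
        rw [integral_add hA (integrable_const _),
          integral_add (hsub m) hint_lin, integral_const_mul, hmean0, integral_const]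
        simp

/-- Lower bound on the worst-case risk: for a Markov kernel `ν` from `X` to `ℝ` with
finite second moments, conditional mean `fstar` and conditional variance `V`, the
worst-case risk of any measurable predictor `f` (supremum over all probability measures
`m` on `X` of `∫⁻ (y - f x')² d(m ⊗ₘ ν)`, in the extended nonnegative reals) is at least
`V x` for every `x`; consequently it is bounded below by `⨆ x, V x`. -/
theorem worst_case_risk_lower_bound
    {X : Type*} [MeasurableSpace X] [Nonempty X]
    (ν : Kernel X ℝ) [IsMarkovKernel ν]
    (hν : ∀ x, Integrable (fun y => y ^ 2) (ν x))
    (fstar : X → ℝ) (hfstar : ∀ x, fstar x = ∫ y, y ∂ν x)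
    (V : X → ℝ) (hV : ∀ x, V x = ∫ y, (y - fstar x) ^ 2 ∂ν x) :
    ∀ f : X → ℝ, Measurable f →
      (∀ x : X, ENNReal.ofReal (V x)
          ≤ ⨆ (m : Measure X) (_ : IsProbabilityMeasure m),
              ∫⁻ p : X × ℝ, ENNReal.ofReal ((p.2 - f p.1) ^ 2) ∂(m ⊗ₘ ν))
      ∧ (⨆ x : X, ENNReal.ofReal (V x))
          ≤ ⨆ (m : Measure X) (_ : IsProbabilityMeasure m),
              ∫⁻ p : X × ℝ, ENNReal.ofReal ((p.2 - f p.1) ^ 2) ∂(m ⊗ₘ ν) := by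
  intro f hf
  have hmeas : Measurable (fun p : X × ℝ => ENNReal.ofReal ((p.2 - f p.1) ^ 2)) :=
    (((measurable_snd.sub (hf.comp measurable_fst)).pow_const 2)).ennreal_ofReal
  have key : ∀ x : X, ENNReal.ofReal (V x)
      ≤ ⨆ (m : Measure X) (_ : IsProbabilityMeasure m),
          ∫⁻ p : X × ℝ, ENNReal.ofReal ((p.2 - f p.1) ^ 2) ∂(m ⊗ₘ ν) := by
    intro x
    refine le_iSup₂_of_le (Measure.dirac x) (by infer_instance) ?_
    rw [Measure.lintegral_compProd hmeas, lintegral_dirac' _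
      (by exact Measurable.lintegral_kernel_prod_right hmeas)]
    have hVle : V x ≤ ∫ y, (y - f x) ^ 2 ∂ν x := by
      rw [hV, hfstar]; exact aux_var_min (hν x) (f x)
    calc ENNReal.ofReal (V x) ≤ ENNReal.ofReal (∫ y, (y - f x) ^ 2 ∂ν x) :=
          ENNReal.ofReal_le_ofReal hVle
      _ ≤ ∫⁻ y, ENNReal.ofReal ((y - f x) ^ 2) ∂ν x := by
          rw [ofReal_integral_eq_lintegral_ofReal ?_ (Filter.Eventually.of_forall fun y => sq_nonneg _)]
          have hL2 : MemLp (fun y : ℝ => y) 2 (ν x) :=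
            (memLp_two_iff_integrable_sq measurable_id.aestronglyMeasurable).2 (hν x)
          have : MemLp (fun y : ℝ => y - f x) 2 (ν x) := hL2.sub (memLp_const _)
          exact (memLp_two_iff_integrable_sq this.aestronglyMeasurable).1 this
  exact ⟨key, iSup_le key⟩
end
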